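/- Let f : x ⟶ w and f' : y ⟶ x be 1-cells of a bicategory. If f' is a lali (resp. a rali), then f is a lali (resp. a rali) if and only if the composite f' ≫ f is a lali (resp. a rali). -/
import Mathlib


open CategoryTheory

namespace Stmt3Aux

open CategoryTheory.Bicategory
open scoped CategoryTheory.Bicategory

universe w₀ v₀ u₀
variable {B : Type u₀} [Bicategory.{w₀, v₀} B]

section Lali

variable {y x w : B} {f' : y ⟶ x} {f : x ⟶ w} {g' : x ⟶ y} {h : w ⟶ y}

theorem L1 (adj' : f' ⊣ g') [IsIso adj'.counit] :
    f' ◁ inv adj'.counit = 𝟙 _ ⊗≫ adj'.unit ▷ f' ⊗≫ 𝟙 _ := by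
  rw [← cancel_mono (f' ◁ adj'.counit), ← Bicategory.whiskerLeft_comp, IsIso.inv_hom_id,
    Bicategory.whiskerLeft_id]
  symm
  calc (𝟙 _ ⊗≫ adj'.unit ▷ f' ⊗≫ 𝟙 _) ≫ f' ◁ adj'.counit
      = 𝟙 _ ⊗≫ leftZigzag adj'.unit adj'.counit ⊗≫ 𝟙 _ := by
        dsimp only [leftZigzag]; bicategory
    _ = 𝟙 (f' ≫ 𝟙 x) := by rw [adj'.left_triangle]; bicategory

variable (adj' : f' ⊣ g') (adjC : (f' ≫ f) ⊣ h)

/-- The unit for the induced adjunction `f ⊣ h ≫ f'`. -/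
noncomputable def laliUnit [IsIso adj'.counit] : 𝟙 x ⟶ f ≫ h ≫ f' :=
  inv adj'.counit ⊗≫ g' ◁ adjC.unit ▷ f' ⊗≫ adj'.counit ▷ (f ≫ h ≫ f') ⊗≫ 𝟙 _

/-- The counit for the induced adjunction `f ⊣ h ≫ f'`. -/
def laliCounit : (h ≫ f') ≫ f ⟶ 𝟙 w :=
  (α_ h f' f).hom ≫ adjC.counit

theorem lali_left_triangle [IsIso adj'.counit] :
    leftZigzag (laliUnit adj' adjC) (laliCounit adjC) = (λ_ f).hom ≫ (ρ_ f).inv := by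
  calc leftZigzag (laliUnit adj' adjC) (laliCounit adjC)
      = 𝟙 _ ⊗≫ inv adj'.counit ▷ f ⊗≫ g' ◁ adjC.unit ▷ (f' ≫ f) ⊗≫
          (adj'.counit ▷ (f ≫ h ≫ f' ≫ f) ≫ 𝟙 x ◁ (f ◁ adjC.counit)) ⊗≫ 𝟙 _ := by
        dsimp only [laliUnit, laliCounit, leftZigzag]; bicategory
    _ = 𝟙 _ ⊗≫ inv adj'.counit ▷ f ⊗≫ g' ◁ (leftZigzag adjC.unit adjC.counit) ⊗≫
          adj'.counit ▷ f ⊗≫ 𝟙 _ := by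
        rw [← whisker_exchange]; dsimp only [leftZigzag]; bicategory
    _ = 𝟙 _ ⊗≫ (inv adj'.counit ≫ adj'.counit) ▷ f ⊗≫ 𝟙 _ := by
        rw [adjC.left_triangle]; bicategory
    _ = (λ_ f).hom ≫ (ρ_ f).inv := by rw [IsIso.inv_hom_id]; bicategory

theorem lali_right_triangle [IsIso adj'.counit] :
    rightZigzag (laliUnit adj' adjC) (laliCounit adjC)
      = (ρ_ (h ≫ f')).hom ≫ (λ_ (h ≫ f')).inv := by
  calc rightZigzag (laliUnit adj' adjC) (laliCounit adjC)
      = 𝟙 _ ⊗≫ h ◁ (f' ◁ inv adj'.counit) ⊗≫ (h ≫ f' ≫ g') ◁ adjC.unit ▷ f' ⊗≫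
          (h ≫ f') ◁ adj'.counit ▷ (f ≫ h ≫ f') ⊗≫ adjC.counit ▷ (h ≫ f') ⊗≫ 𝟙 _ := by
        dsimp only [laliUnit, laliCounit, rightZigzag]; bicategory
    _ = 𝟙 _ ⊗≫ h ◁ (adj'.unit ▷ (𝟙 y) ≫ (f' ≫ g') ◁ adjC.unit) ▷ f' ⊗≫
          (h ≫ f') ◁ adj'.counit ▷ (f ≫ h ≫ f') ⊗≫ adjC.counit ▷ (h ≫ f') ⊗≫ 𝟙 _ := by
        rw [L1 adj']; bicategory
    _ = 𝟙 _ ⊗≫ h ◁ (𝟙 y ◁ adjC.unit ≫ adj'.unit ▷ ((f' ≫ f) ≫ h)) ▷ f' ⊗≫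
          (h ≫ f') ◁ adj'.counit ▷ (f ≫ h ≫ f') ⊗≫ adjC.counit ▷ (h ≫ f') ⊗≫ 𝟙 _ := by
        rw [← whisker_exchange]
    _ = 𝟙 _ ⊗≫ (h ≫ 𝟙 y) ◁ adjC.unit ▷ f' ⊗≫
          h ◁ (leftZigzag adj'.unit adj'.counit) ▷ ((f ≫ h) ≫ f') ⊗≫
          adjC.counit ▷ (h ≫ f') ⊗≫ 𝟙 _ := by
        dsimp only [leftZigzag]; bicategory
    _ = 𝟙 _ ⊗≫ (rightZigzag adjC.unit adjC.counit) ▷ f' ⊗≫ 𝟙 _ := by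
        rw [adj'.left_triangle]; dsimp only [rightZigzag]; bicategory
    _ = (ρ_ (h ≫ f')).hom ≫ (λ_ (h ≫ f')).inv := by
        rw [adjC.right_triangle]; bicategory

/-- The induced adjunction `f ⊣ h ≫ f'`. -/
noncomputable def laliAdj [IsIso adj'.counit] : f ⊣ h ≫ f' where
  unit := laliUnit adj' adjC
  counit := laliCounit adjC
  left_triangle := lali_left_triangle adj' adjC
  right_triangle := lali_right_triangle adj' adjC

end Lali

section Rali

variable {y x w : B} {f' : y ⟶ x} {f : x ⟶ w} {e' : x ⟶ y} {E : w ⟶ y}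

theorem L1' (adj2' : e' ⊣ f') [IsIso adj2'.unit] :
    f' ◁ inv adj2'.unit = 𝟙 _ ⊗≫ adj2'.counit ▷ f' ⊗≫ 𝟙 _ := by
  rw [← cancel_epi (f' ◁ adj2'.unit), ← Bicategory.whiskerLeft_comp, IsIso.hom_inv_id,
    Bicategory.whiskerLeft_id]
  symm
  calc f' ◁ adj2'.unit ≫ (𝟙 _ ⊗≫ adj2'.counit ▷ f' ⊗≫ 𝟙 _)
      = 𝟙 _ ⊗≫ rightZigzag adj2'.unit adj2'.counit ⊗≫ 𝟙 _ := by
        dsimp only [rightZigzag]; bicategory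
    _ = 𝟙 (f' ≫ 𝟙 x) := by rw [adj2'.right_triangle]; bicategory

variable (adj2' : e' ⊣ f') (adjC : E ⊣ (f' ≫ f))

/-- The unit for the induced adjunction `E ≫ f' ⊣ f`. -/
def raliUnit : 𝟙 w ⟶ (E ≫ f') ≫ f :=
  adjC.unit ⊗≫ 𝟙 _

/-- The counit for the induced adjunction `E ≫ f' ⊣ f`. -/
noncomputable def raliCounit [IsIso adj2'.unit] : f ≫ E ≫ f' ⟶ 𝟙 x :=
  𝟙 _ ⊗≫ adj2'.unit ▷ (f ≫ E ≫ f') ⊗≫ e' ◁ adjC.counit ▷ f' ⊗≫ inv adj2'.unit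

theorem rali_left_triangle [IsIso adj2'.unit] :
    leftZigzag (raliUnit adjC) (raliCounit adj2' adjC)
      = (λ_ (E ≫ f')).hom ≫ (ρ_ (E ≫ f')).inv := by
  calc leftZigzag (raliUnit adjC) (raliCounit adj2' adjC)
      = 𝟙 _ ⊗≫ adjC.unit ▷ (E ≫ f') ⊗≫ (E ≫ f') ◁ adj2'.unit ▷ (f ≫ E ≫ f') ⊗≫
          (E ≫ f' ≫ e') ◁ adjC.counit ▷ f' ⊗≫ E ◁ (f' ◁ inv adj2'.unit) ⊗≫ 𝟙 _ := by
        dsimp only [raliUnit, raliCounit, leftZigzag]; bicategory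
    _ = 𝟙 _ ⊗≫ adjC.unit ▷ (E ≫ f') ⊗≫ (E ≫ f') ◁ adj2'.unit ▷ (f ≫ E ≫ f') ⊗≫
          E ◁ ((f' ≫ e') ◁ adjC.counit ≫ adj2'.counit ▷ (𝟙 y)) ▷ f' ⊗≫ 𝟙 _ := by
        rw [L1' adj2']; bicategory
    _ = 𝟙 _ ⊗≫ adjC.unit ▷ (E ≫ f') ⊗≫ (E ≫ f') ◁ adj2'.unit ▷ (f ≫ E ≫ f') ⊗≫
          E ◁ (adj2'.counit ▷ ((f' ≫ f) ≫ E) ≫ 𝟙 y ◁ adjC.counit) ▷ f' ⊗≫ 𝟙 _ := by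
        rw [whisker_exchange]
    _ = 𝟙 _ ⊗≫ adjC.unit ▷ (E ≫ f') ⊗≫
          E ◁ (rightZigzag adj2'.unit adj2'.counit) ▷ ((f ≫ E) ≫ f') ⊗≫
          E ◁ adjC.counit ▷ f' ⊗≫ 𝟙 _ := by
        dsimp only [rightZigzag]; bicategory
    _ = 𝟙 _ ⊗≫ (leftZigzag adjC.unit adjC.counit) ▷ f' ⊗≫ 𝟙 _ := by
        rw [adj2'.right_triangle]; dsimp only [leftZigzag]; bicategory
    _ = (λ_ (E ≫ f')).hom ≫ (ρ_ (E ≫ f')).inv := by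
        rw [adjC.left_triangle]; bicategory

theorem rali_right_triangle [IsIso adj2'.unit] :
    rightZigzag (raliUnit adjC) (raliCounit adj2' adjC) = (ρ_ f).hom ≫ (λ_ f).inv := by
  calc rightZigzag (raliUnit adjC) (raliCounit adj2' adjC)
      = 𝟙 _ ⊗≫ (𝟙 x ◁ (f ◁ adjC.unit) ≫ adj2'.unit ▷ (f ≫ E ≫ f' ≫ f)) ⊗≫
          e' ◁ adjC.counit ▷ (f' ≫ f) ⊗≫ inv adj2'.unit ▷ f ⊗≫ 𝟙 _ := by
        dsimp only [raliUnit, raliCounit, rightZigzag]; bicategory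
    _ = 𝟙 _ ⊗≫ adj2'.unit ▷ f ⊗≫ e' ◁ (rightZigzag adjC.unit adjC.counit) ⊗≫
          inv adj2'.unit ▷ f ⊗≫ 𝟙 _ := by
        rw [whisker_exchange]; dsimp only [rightZigzag]; bicategory
    _ = 𝟙 _ ⊗≫ (adj2'.unit ≫ inv adj2'.unit) ▷ f ⊗≫ 𝟙 _ := by
        rw [adjC.right_triangle]; bicategory
    _ = (ρ_ f).hom ≫ (λ_ f).inv := by rw [IsIso.hom_inv_id]; bicategory

/-- The induced adjunction `E ≫ f' ⊣ f`. -/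
noncomputable def raliAdj [IsIso adj2'.unit] : E ≫ f' ⊣ f where
  unit := raliUnit adjC
  counit := raliCounit adj2' adjC
  left_triangle := rali_left_triangle adj2' adjC
  right_triangle := rali_right_triangle adj2' adjC

end Rali

end Stmt3Aux

/-- A 1-cell `f` in a bicategory is a *lali* (left adjoint and left inverse up to
invertible 2-cell) if it has a right adjoint with invertible counit. -/
def IsLali {B : Type*} [Bicategory B] {a b : B} (f : a ⟶ b) : Prop :=
  ∃ (g : b ⟶ a) (adj : Bicategory.Adjunction f g), IsIso adj.counit

/-- A 1-cell `f` in a bicategory is a *rali* (right adjoint and left inverse up to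
invertible 2-cell) if it has a left adjoint with invertible unit. -/
def IsRali {B : Type*} [Bicategory B] {a b : B} (f : a ⟶ b) : Prop :=
  ∃ (e : b ⟶ a) (adj : Bicategory.Adjunction e f), IsIso adj.unit

/-- right cancellation property: for 1-cells `f : x ⟶ w` and `f' : y ⟶ x`,
if `f'` is a lali (resp. a rali) then `f` is a lali (resp. a rali) iff the composite
`f' ≫ f` is a lali (resp. a rali). -/
theorem stmt3 {B : Type*} [Bicategory B] {x w y : B} (f : x ⟶ w) (f' : y ⟶ x) :
    (IsLali f' → (IsLali f ↔ IsLali (f' ≫ f))) ∧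
    (IsRali f' → (IsRali f ↔ IsRali (f' ≫ f))) := by
  open CategoryTheory.Bicategory in
  open scoped CategoryTheory.Bicategory in
  constructor
  · rintro ⟨g', adj', hc'⟩
    haveI := hc'
    constructor
    · rintro ⟨g, adj, hc⟩
      haveI := hc
      refine ⟨g ≫ g', adj'.comp adj, ?_⟩
      dsimp only [Bicategory.Adjunction.comp, Bicategory.Adjunction.compCounit,
        bicategoricalComp]
      infer_instance
    · rintro ⟨h, adjC, hC⟩
      haveI := hC
      refine ⟨h ≫ f', Stmt3Aux.laliAdj adj' adjC, ?_⟩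
      dsimp only [Stmt3Aux.laliAdj, Stmt3Aux.laliCounit]
      infer_instance
  · rintro ⟨e', adj2', hu'⟩
    haveI := hu'
    constructor
    · rintro ⟨e, adj, hu⟩
      haveI := hu
      refine ⟨e ≫ e', adj.comp adj2', ?_⟩
      dsimp only [Bicategory.Adjunction.comp, Bicategory.Adjunction.compUnit,
        bicategoricalComp]
      infer_instance
    · rintro ⟨E, adjC, hU⟩
      haveI := hU
      refine ⟨E ≫ f', Stmt3Aux.raliAdj adj2' adjC, ?_⟩
      dsimp only [Stmt3Aux.raliAdj, Stmt3Aux.raliUnit, bicategoricalComp]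
      infer_instance
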